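/- Let s ∈ (0,1), 1 < p with N > sp and p*_s = Np/(N - sp). Suppose ε > 0 and V : ℝᴺ → ℝ is continuous with inf V = V₀ > 0 and V(x) → ∞ as |x| → ∞. Then the space Y = {u ∈ W^{s,p}(ℝᴺ) : ∫ V(εx) |u|^p dx < ∞}, equipped with norm ‖u‖^p = [u]_{s,p}^p + ∫ V(εx)|u|^p dx, embeds compactly into L^p(ℝᴺ). -/

import Mathlib

open Real MeasureTheory Metric Filter Topology
open scoped ENNReal

lemma jensen_prob {α : Type*} [MeasurableSpace α] (ν : Measure α) [IsProbabilityMeasure ν]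
    {p : ℝ} (hp : 1 < p) (F : α → ℝ) (hFi : Integrable F ν) :
    ENNReal.ofReal (|∫ y, F y ∂ν| ^ p) ≤ ∫⁻ y, ENNReal.ofReal (|F y| ^ p) ∂ν := by
  have hp0 : (0:ℝ) ≤ p := le_of_lt (lt_trans one_pos hp)
  set L₁ : ℝ≥0∞ := ∫⁻ y, ENNReal.ofReal (|F y|) ∂ν with hL₁
  have hmeas : AEStronglyMeasurable (fun y => |F y|) ν := hFi.1.norm
  have habs : ∫ y, |F y| ∂ν = L₁.toReal := by
    rw [hL₁]
    exact integral_eq_lintegral_of_nonneg_ae (Filter.Eventually.of_forall fun y => abs_nonneg _) hmeas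
  have hL₁top : L₁ ≠ ⊤ := by
    have := hFi.2
    rw [HasFiniteIntegral] at this
    simp only [hL₁]
    simp_rw [← ofReal_norm] at this
    simpa [Real.norm_eq_abs] using this.ne
  have h1 : |∫ y, F y ∂ν| ≤ L₁.toReal := by
    rw [← habs]
    calc |∫ y, F y ∂ν| = ‖∫ y, F y ∂ν‖ := (Real.norm_eq_abs _).symm
    _ ≤ ∫ y, ‖F y‖ ∂ν := norm_integral_le_integral_norm F
    _ = ∫ y, |F y| ∂ν := by simp [Real.norm_eq_abs]
  have h2 : ENNReal.ofReal (|∫ y, F y ∂ν| ^ p) ≤ L₁ ^ p := by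
    calc ENNReal.ofReal (|∫ y, F y ∂ν| ^ p) ≤ ENNReal.ofReal (L₁.toReal ^ p) :=
      ENNReal.ofReal_le_ofReal (Real.rpow_le_rpow (abs_nonneg _) h1 hp0)
    _ = (ENNReal.ofReal L₁.toReal) ^ p := (ENNReal.ofReal_rpow_of_nonneg ENNReal.toReal_nonneg hp0).symm
    _ = L₁ ^ p := by rw [ENNReal.ofReal_toReal hL₁top]
  refine h2.trans ?_
  -- Hölder with g = 1
  have hpq : p.HolderConjugate (p.conjExponent) := Real.HolderConjugate.conjExponent hp
  have hf : AEMeasurable (fun y => ENNReal.ofReal (|F y|)) ν := hmeas.aemeasurable.ennreal_ofReal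
  have hhold := ENNReal.lintegral_mul_le_Lp_mul_Lq ν hpq hf aemeasurable_const (g := fun _ => (1:ℝ≥0∞))
  simp only [Pi.mul_apply, mul_one, ENNReal.one_rpow, lintegral_const, measure_univ, one_mul] at hhold
  have h3 : L₁ ≤ (∫⁻ y, (ENNReal.ofReal (|F y|)) ^ p ∂ν) ^ (1/p) := by
    simpa using hhold
  calc L₁ ^ p ≤ ((∫⁻ y, (ENNReal.ofReal (|F y|)) ^ p ∂ν) ^ (1/p)) ^ p :=
        ENNReal.rpow_le_rpow h3 hp0
  _ = ∫⁻ y, (ENNReal.ofReal (|F y|)) ^ p ∂ν := by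
        rw [← ENNReal.rpow_mul, one_div, inv_mul_cancel₀ (ne_of_gt (lt_trans one_pos hp)), ENNReal.rpow_one]
  _ = ∫⁻ y, ENNReal.ofReal (|F y| ^ p) ∂ν := by
        congr 1; funext y; exact ENNReal.ofReal_rpow_of_nonneg (abs_nonneg _) hp0



lemma avg_dev {α : Type*} [MeasurableSpace α] (μ : Measure α) (hμ0 : μ Set.univ ≠ 0)
    (hμt : μ Set.univ ≠ ⊤) {p : ℝ} (hp : 1 < p) (g : α → ℝ) (hgi : Integrable g μ) (a : ℝ) :
    ENNReal.ofReal (|a - (μ Set.univ).toReal⁻¹ * ∫ y, g y ∂μ| ^ p) ≤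
      (μ Set.univ)⁻¹ * ∫⁻ y, ENNReal.ofReal (|a - g y| ^ p) ∂μ := by
  haveI : IsFiniteMeasure μ := ⟨lt_top_iff_ne_top.2 hμt⟩
  set ν : Measure α := (μ Set.univ)⁻¹ • μ with hν
  haveI : IsProbabilityMeasure ν := ⟨by
    simp [hν, Measure.smul_apply, smul_eq_mul, ENNReal.inv_mul_cancel hμ0 hμt]⟩
  have hFiμ : Integrable (fun y => a - g y) μ := (integrable_const a).sub hgi
  have hFiν : Integrable (fun y => a - g y) ν := by
    exact hFiμ.smul_measure (by simp [hμ0])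
  have key := jensen_prob ν hp (fun y => a - g y) hFiν
  have htr : (μ Set.univ).toReal ≠ 0 := ENNReal.toReal_ne_zero.2 ⟨hμ0, hμt⟩
  have hint : ∫ y, a - g y ∂ν = a - (μ Set.univ).toReal⁻¹ * ∫ y, g y ∂μ := by
    rw [hν, integral_smul_measure, integral_sub (integrable_const a) hgi, integral_const]
    rw [ENNReal.toReal_inv]
    simp only [smul_eq_mul]
    field_simp
    rw [measureReal_def]
  have hlin : ∫⁻ y, ENNReal.ofReal (|a - g y| ^ p) ∂ν
      = (μ Set.univ)⁻¹ * ∫⁻ y, ENNReal.ofReal (|a - g y| ^ p) ∂μ := by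
    rw [hν, lintegral_smul_measure, smul_eq_mul]
  rw [hint, hlin] at key
  exact key

variable {N : ℕ}

noncomputable def cubeIdx (N : ℕ) (δ : ℝ) (x : EuclideanSpace ℝ (Fin N)) : Fin N → ℤ :=
  fun i => ⌊x i / δ⌋

def cube (N : ℕ) (δ : ℝ) (z : Fin N → ℤ) : Set (EuclideanSpace ℝ (Fin N)) :=
  cubeIdx N δ ⁻¹' {z}

lemma measurable_cubeIdx (δ : ℝ) : Measurable (cubeIdx N δ) := by
  apply measurable_pi_iff.2
  intro i
  exact Int.measurable_floor.comp (((EuclideanSpace.proj (𝕜 := ℝ) i).continuous.measurable).div_const δ)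

lemma measurableSet_cube (δ : ℝ) (z : Fin N → ℤ) : MeasurableSet (cube N δ z) :=
  measurable_cubeIdx δ (MeasurableSet.singleton z)

lemma mem_cube {δ : ℝ} {z : Fin N → ℤ} {x : EuclideanSpace ℝ (Fin N)} :
    x ∈ cube N δ z ↔ ∀ i, ⌊x i / δ⌋ = z i := by
  simp [cube, cubeIdx, Set.mem_preimage, funext_iff]

lemma coord_bound_of_mem_cube {δ : ℝ} (hδ : 0 < δ) {z : Fin N → ℤ} {x y : EuclideanSpace ℝ (Fin N)}
    (hx : x ∈ cube N δ z) (hy : y ∈ cube N δ z) (i : Fin N) : |x i - y i| ≤ δ := by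
  rw [mem_cube] at hx hy
  have h1 := (Int.floor_eq_iff).1 (hx i)
  have h2 := (Int.floor_eq_iff).1 (hy i)
  have hx1 : δ * z i ≤ x i := by rw [← le_div_iff₀' hδ]; exact h1.1
  have hx2 : x i < δ * z i + δ := by nlinarith [(div_lt_iff₀ hδ).1 h2.2, (div_lt_iff₀ hδ).1 h1.2]
  have hy1 : δ * z i ≤ y i := by rw [← le_div_iff₀' hδ]; exact h2.1
  have hy2 : y i < δ * z i + δ := by nlinarith [(div_lt_iff₀ hδ).1 h2.2]
  rw [abs_le]
  constructor <;> nlinarith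

lemma dist_le_of_mem_cube {δ : ℝ} (hδ : 0 < δ) {z : Fin N → ℤ} {x y : EuclideanSpace ℝ (Fin N)}
    (hx : x ∈ cube N δ z) (hy : y ∈ cube N δ z) : dist x y ≤ δ * Real.sqrt N := by
  rw [EuclideanSpace.dist_eq]
  have : ∑ i, dist (x i) (y i) ^ 2 ≤ (N : ℝ) * δ ^ 2 := by
    calc ∑ i, dist (x i) (y i) ^ 2 ≤ ∑ _i : Fin N, δ ^ 2 := by
          apply Finset.sum_le_sum
          intro i _
          have := coord_bound_of_mem_cube hδ hx hy i
          rw [Real.dist_eq]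
          nlinarith [abs_nonneg (x i - y i)]
    _ = (N : ℝ) * δ ^ 2 := by simp [mul_comm]
  calc Real.sqrt (∑ i, dist (x i) (y i) ^ 2) ≤ Real.sqrt ((N:ℝ) * δ ^ 2) := Real.sqrt_le_sqrt this
  _ = δ * Real.sqrt N := by
      rw [Real.sqrt_mul (Nat.cast_nonneg N), Real.sqrt_sq_eq_abs, abs_of_pos hδ]; ring

noncomputable def cubeCtr (N : ℕ) (δ : ℝ) (z : Fin N → ℤ) : EuclideanSpace ℝ (Fin N) :=
  WithLp.toLp 2 (fun i => δ * z i + δ / 2)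

lemma cubeCtr_mem {δ : ℝ} (hδ : 0 < δ) (z : Fin N → ℤ) : cubeCtr N δ z ∈ cube N δ z := by
  rw [mem_cube]
  intro i
  have : (δ * z i + δ / 2) / δ = z i + 1/2 := by field_simp
  simp only [cubeCtr, WithLp.ofLp_toLp]; rw [this]
  rw [Int.floor_eq_iff]
  constructor <;> norm_num

lemma coord_le_dist (x y : EuclideanSpace ℝ (Fin N)) (i : Fin N) : dist (x i) (y i) ≤ dist x y := by
  rw [EuclideanSpace.dist_eq]
  apply Real.le_sqrt_of_sq_le
  exact Finset.single_le_sum (f := fun j => dist (x j) (y j) ^ 2) (fun j _ => sq_nonneg _) (Finset.mem_univ i)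

lemma ball_subset_cube {δ : ℝ} (hδ : 0 < δ) (z : Fin N → ℤ) :
    ball (cubeCtr N δ z) (δ / 2) ⊆ cube N δ z := by
  intro x hx
  rw [mem_cube]
  intro i
  have hc : dist (x i) (cubeCtr N δ z i) ≤ dist x (cubeCtr N δ z) := coord_le_dist _ _ i
  have hxi : |x i - (δ * z i + δ/2)| < δ/2 := by
    have := lt_of_le_of_lt hc (mem_ball.1 hx)
    rw [Real.dist_eq] at this
    exact this
  rw [Int.floor_eq_iff]
  rw [abs_lt] at hxi
  constructor
  · rw [le_div_iff₀ hδ]; nlinarith [hxi.1]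
  · rw [div_lt_iff₀ hδ]; push_cast; nlinarith [hxi.2]

lemma cube_subset_closedBall {δ : ℝ} (hδ : 0 < δ) (z : Fin N → ℤ) :
    cube N δ z ⊆ closedBall (cubeCtr N δ z) (δ * Real.sqrt N) := fun x hx =>
  mem_closedBall.2 (dist_le_of_mem_cube hδ hx (cubeCtr_mem hδ z))

lemma volume_cube_lt_top {δ : ℝ} (hδ : 0 < δ) (z : Fin N → ℤ) : volume (cube N δ z) < ⊤ :=
  lt_of_le_of_lt (measure_mono (cube_subset_closedBall hδ z)) measure_closedBall_lt_top

lemma volume_cube_pos {δ : ℝ} (hδ : 0 < δ) (z : Fin N → ℤ) : 0 < volume (cube N δ z) :=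
  lt_of_lt_of_le (measure_ball_pos volume _ (by linarith)) (measure_mono (ball_subset_cube hδ z))

lemma volume_cube_lower (hN : 1 ≤ N) {δ : ℝ} (hδ : 0 < δ) (z : Fin N → ℤ) :
    ENNReal.ofReal ((δ/2) ^ N) * volume (ball (0 : EuclideanSpace ℝ (Fin N)) 1) ≤
      volume (cube N δ z) := by
  haveI : Nonempty (Fin N) := ⟨⟨0, hN⟩⟩
  haveI : Nontrivial (EuclideanSpace ℝ (Fin N)) := inferInstance
  have := Measure.addHaar_ball (volume : Measure (EuclideanSpace ℝ (Fin N))) (cubeCtr N δ z)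
    (r := δ/2) (by linarith)
  rw [finrank_euclideanSpace_fin] at this
  rw [← this]
  exact measure_mono (ball_subset_cube hδ z)

lemma cube_pairwise_disjoint (δ : ℝ) (S : Finset (Fin N → ℤ)) :
    (↑S : Set (Fin N → ℤ)).PairwiseDisjoint (cube N δ) := by
  intro a _ b _ hab
  apply Set.disjoint_left.2
  intro x hxa hxb
  exact hab ((Set.mem_preimage.1 hxa).symm.trans (Set.mem_preimage.1 hxb))

lemma coord_le_norm (x : EuclideanSpace ℝ (Fin N)) (i : Fin N) : |x i| ≤ ‖x‖ := by
  have := coord_le_dist x 0 i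
  simpa [Real.dist_eq] using this

lemma norm_ge_of_idx_not_mem {δ : ℝ} (hδ : 0 < δ) (m : ℕ) (x : EuclideanSpace ℝ (Fin N))
    (h : cubeIdx N δ x ∉ Finset.Icc (fun _ => (-(m:ℤ)-1)) (fun _ => (m:ℤ))) :
    δ * m ≤ ‖x‖ := by
  rw [Finset.mem_Icc] at h
  push_neg at h
  have hex : ∃ i, ⌊x i / δ⌋ < -(m:ℤ)-1 ∨ (m:ℤ) < ⌊x i / δ⌋ := by
    by_contra hcon
    push_neg at hcon
    exact h (fun i => (hcon i).1) (fun i => (hcon i).2)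
  obtain ⟨i, hi⟩ := hex
  have hxi : δ * m ≤ |x i| := by
    rcases hi with hi | hi
    · have h1 : x i / δ < -(m:ℝ) := by
        have := Int.lt_floor_add_one (x i / δ)
        have hiz : ⌊x i / δ⌋ + 1 ≤ -(m:ℤ) := by omega
        have hi' : (⌊x i / δ⌋ : ℝ) + 1 ≤ -(m:ℝ) := by exact_mod_cast hiz
        linarith
      have h2 : x i < δ * (-(m:ℝ)) := by
        rw [div_lt_iff₀ hδ] at h1; linarith [h1]
      rw [abs_of_nonpos (by nlinarith [Nat.cast_nonneg (α := ℝ) m])]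
      nlinarith [Nat.cast_nonneg (α := ℝ) m]
    · have h1 : (m:ℝ) + 1 ≤ x i / δ := by
        have := Int.floor_le (x i / δ)
        have hiz : (m:ℤ) + 1 ≤ ⌊x i / δ⌋ := by omega
        have hi' : (m:ℝ) + 1 ≤ (⌊x i / δ⌋ : ℝ) := by exact_mod_cast hiz
        linarith
      have h2 : δ * ((m:ℝ) + 1) ≤ x i := by
        rw [le_div_iff₀ hδ] at h1; linarith
      rw [abs_of_nonneg (by nlinarith [Nat.cast_nonneg (α := ℝ) m])]
      nlinarith
  exact le_trans hxi (coord_le_norm x i)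




noncomputable def cubeAvg (N : ℕ) (δ : ℝ) (g : EuclideanSpace ℝ (Fin N) → ℝ) (z : Fin N → ℤ) : ℝ :=
  (volume (cube N δ z)).toReal⁻¹ * ∫ y in cube N δ z, g y

noncomputable def pfun (N : ℕ) (δ : ℝ) (S : Finset (Fin N → ℤ))
    (g : EuclideanSpace ℝ (Fin N) → ℝ) (x : EuclideanSpace ℝ (Fin N)) : ℝ :=
  ∑ z ∈ S, (cube N δ z).indicator (fun _ => cubeAvg N δ g z) x

lemma mem_cube_iff {N : ℕ} {δ : ℝ} {z : Fin N → ℤ} {x : EuclideanSpace ℝ (Fin N)} :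
    x ∈ cube N δ z ↔ cubeIdx N δ x = z := Iff.rfl

lemma pfun_eq_of_mem {N : ℕ} {δ : ℝ} {S : Finset (Fin N → ℤ)} {z : Fin N → ℤ} (hz : z ∈ S)
    {g : EuclideanSpace ℝ (Fin N) → ℝ} {x : EuclideanSpace ℝ (Fin N)} (hx : x ∈ cube N δ z) :
    pfun N δ S g x = cubeAvg N δ g z := by
  rw [pfun, Finset.sum_eq_single_of_mem z hz]
  · exact Set.indicator_of_mem hx _
  · intro z' _ hz'
    apply Set.indicator_of_notMem
    intro hx'
    exact hz' ((mem_cube_iff.1 hx').symm.trans (mem_cube_iff.1 hx))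

lemma pfun_eq_zero_of_not_mem {N : ℕ} {δ : ℝ} {S : Finset (Fin N → ℤ)}
    {g : EuclideanSpace ℝ (Fin N) → ℝ} {x : EuclideanSpace ℝ (Fin N)}
    (hx : cubeIdx N δ x ∉ S) : pfun N δ S g x = 0 := by
  rw [pfun]
  apply Finset.sum_eq_zero
  intro z hz
  apply Set.indicator_of_notMem
  intro hx'
  rw [mem_cube_iff.1 hx'] at hx
  exact hx hz

lemma key_pointwise {N : ℕ} {p e D : ℝ} (hp : 0 < p) (he : 0 ≤ e) (hD : 0 < D)
    {x y : EuclideanSpace ℝ (Fin N)} (hdist : dist x y ≤ D) (a b : ℝ) (hab : x = y → a = b) :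
    ENNReal.ofReal (|a - b| ^ p) ≤
      ENNReal.ofReal (D ^ e) * ENNReal.ofReal (|a - b| ^ p / dist x y ^ e) := by
  rcases eq_or_ne x y with rfl | hxy
  · rw [hab rfl]
    simp [Real.zero_rpow (ne_of_gt hp)]
  · have hd0 : 0 < dist x y := dist_pos.2 hxy
    have hde : dist x y ^ e ≤ D ^ e := Real.rpow_le_rpow dist_nonneg hdist he
    have hDe : 0 < D ^ e := Real.rpow_pos_of_pos hD e
    have hdee : 0 < dist x y ^ e := Real.rpow_pos_of_pos hd0 e
    rw [← ENNReal.ofReal_mul (le_of_lt hDe)]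
    apply ENNReal.ofReal_le_ofReal
    rw [mul_div_assoc']
    rw [le_div_iff₀ hdee]
    have h1 : |a - b| ^ p * dist x y ^ e ≤ |a - b| ^ p * D ^ e := by
      apply mul_le_mul_of_nonneg_left hde (Real.rpow_nonneg (abs_nonneg _) p)
    calc |a - b| ^ p * dist x y ^ e ≤ |a - b| ^ p * D ^ e := h1
    _ = D ^ e * |a - b| ^ p := by ring

lemma cubes_estimate {N : ℕ} (hN : 1 ≤ N) {p s δ : ℝ} (hp : 1 < p) (he : 0 ≤ (N:ℝ) + s * p)
    (hδ : 0 < δ) (g : EuclideanSpace ℝ (Fin N) → ℝ) (hgp : MemLp g (ENNReal.ofReal p) volume)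
    (S : Finset (Fin N → ℤ)) :
    ∫⁻ x in ⋃ z ∈ S, cube N δ z, ENNReal.ofReal (|g x - pfun N δ S g x| ^ p) ≤
      ENNReal.ofReal ((δ * Real.sqrt N) ^ ((N:ℝ) + s * p) /
          ((δ/2) ^ N * (volume (ball (0:EuclideanSpace ℝ (Fin N)) 1)).toReal)) *
        ∫⁻ x, ∫⁻ y, ENNReal.ofReal (|g x - g y| ^ p / dist x y ^ ((N:ℝ) + s * p)) := by
  set e : ℝ := (N:ℝ) + s * p with he_def
  set D : ℝ := δ * Real.sqrt N with hD_def
  have hD : 0 < D := by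
    apply mul_pos hδ
    apply Real.sqrt_pos.2
    exact_mod_cast Nat.pos_of_ne_zero (by omega)
  set vb : ℝ≥0∞ := volume (ball (0:EuclideanSpace ℝ (Fin N)) 1) with hvb_def
  have hvb0 : vb ≠ 0 := (measure_ball_pos volume _ one_pos).ne'
  have hvbt : vb ≠ ⊤ := measure_ball_lt_top.ne
  set ω : ℝ := vb.toReal with hω_def
  have hω : 0 < ω := ENNReal.toReal_pos hvb0 hvbt
  set W : ℝ≥0∞ := (ENNReal.ofReal ((δ/2) ^ N * ω))⁻¹ with hW_def
  set I : EuclideanSpace ℝ (Fin N) → ℝ≥0∞ :=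
    fun x => ∫⁻ y, ENNReal.ofReal (|g x - g y| ^ p / dist x y ^ e) with hI_def
  have hcube : ∀ z : Fin N → ℤ,
      ∫⁻ x in cube N δ z, ENNReal.ofReal (|g x - pfun N δ S g x| ^ p) ∂volume ≤
        (if z ∈ S then ENNReal.ofReal (D ^ e) * W * ∫⁻ x in cube N δ z, I x else ⊤) := by
    intro z
    by_cases hzS : z ∈ S
    swap
    · simp [hzS]
    simp only [hzS, if_true]
    set Q : Set (EuclideanSpace ℝ (Fin N)) := cube N δ z with hQ_def
    have hQm : MeasurableSet Q := measurableSet_cube δ z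
    have hQ0 : volume Q ≠ 0 := (volume_cube_pos hδ z).ne'
    have hQt : volume Q ≠ ⊤ := (volume_cube_lt_top hδ z).ne
    haveI : IsFiniteMeasure (volume.restrict Q) :=
      ⟨by rw [Measure.restrict_apply_univ]; exact volume_cube_lt_top hδ z⟩
    have hgi : Integrable g (volume.restrict Q) :=
      (hgp.restrict Q).integrable (ENNReal.one_le_ofReal.2 (le_of_lt hp))
    -- step 1: replace pfun by the average on the cube
    have step1 : ∫⁻ x in Q, ENNReal.ofReal (|g x - pfun N δ S g x| ^ p) ∂volume =
        ∫⁻ x in Q, ENNReal.ofReal (|g x - cubeAvg N δ g z| ^ p) ∂volume := by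
      apply setLIntegral_congr_fun hQm
      intro x hx
      beta_reduce
      rw [pfun_eq_of_mem hzS hx]
    rw [step1]
    -- step 2: Jensen via avg_dev
    have step2 : ∫⁻ x in Q, ENNReal.ofReal (|g x - cubeAvg N δ g z| ^ p) ∂volume ≤
        ∫⁻ x in Q, ((volume Q)⁻¹ * ∫⁻ y in Q, ENNReal.ofReal (|g x - g y| ^ p)) ∂volume := by
      apply lintegral_mono
      intro x
      have := avg_dev (volume.restrict Q) (by rwa [Measure.restrict_apply_univ])
        (by rwa [Measure.restrict_apply_univ]) hp g hgi (g x)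
      rw [Measure.restrict_apply_univ] at this
      exact this
    refine step2.trans ?_
    rw [lintegral_const_mul' _ _ (by simp [hQ0])]
    -- step 3: inner integral bound for x in Q
    have step3 : ∫⁻ x in Q, (∫⁻ y in Q, ENNReal.ofReal (|g x - g y| ^ p)) ∂volume ≤
        ENNReal.ofReal (D ^ e) * ∫⁻ x in Q, I x ∂volume := by
      rw [← lintegral_const_mul' _ _ ENNReal.ofReal_ne_top]
      apply lintegral_mono_ae
      rw [ae_restrict_iff' hQm]
      apply Filter.Eventually.of_forall
      intro x hx
      calc ∫⁻ y in Q, ENNReal.ofReal (|g x - g y| ^ p)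
          ≤ ∫⁻ y in Q, ENNReal.ofReal (D ^ e) * ENNReal.ofReal (|g x - g y| ^ p / dist x y ^ e) := by
            apply lintegral_mono_ae
            rw [ae_restrict_iff' hQm]
            apply Filter.Eventually.of_forall
            intro y hy
            exact key_pointwise (lt_trans one_pos hp) he hD (dist_le_of_mem_cube hδ hx hy)
              (g x) (g y) (fun h => by rw [h])
      _ = ENNReal.ofReal (D ^ e) * ∫⁻ y in Q, ENNReal.ofReal (|g x - g y| ^ p / dist x y ^ e) := by
            rw [lintegral_const_mul' _ _ ENNReal.ofReal_ne_top]
      _ ≤ ENNReal.ofReal (D ^ e) * I x := by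
            gcongr
            exact setLIntegral_le_lintegral _ _
    calc (volume Q)⁻¹ * ∫⁻ x in Q, (∫⁻ y in Q, ENNReal.ofReal (|g x - g y| ^ p)) ∂volume
        ≤ W * (ENNReal.ofReal (D ^ e) * ∫⁻ x in Q, I x ∂volume) := by
          apply mul_le_mul' _ step3
          rw [hW_def]
          apply ENNReal.inv_le_inv.2
          rw [ENNReal.ofReal_mul (by positivity), hω_def, ENNReal.ofReal_toReal hvbt]
          exact volume_cube_lower hN hδ z
    _ = ENNReal.ofReal (D ^ e) * W * ∫⁻ x in cube N δ z, I x := by ring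
  -- sum over cubes
  rw [lintegral_biUnion_finset (cube_pairwise_disjoint δ S) (fun z _ => measurableSet_cube δ z)]
  have hsum : ∑ z ∈ S, ∫⁻ x in cube N δ z, ENNReal.ofReal (|g x - pfun N δ S g x| ^ p) ∂volume ≤
      ENNReal.ofReal (D ^ e) * W * ∑ z ∈ S, ∫⁻ x in cube N δ z, I x ∂volume := by
    rw [Finset.mul_sum]
    apply Finset.sum_le_sum
    intro z hz
    have := hcube z
    rwa [if_pos hz] at this
  refine hsum.trans ?_
  have hcoef : ENNReal.ofReal (D ^ e) * W = ENNReal.ofReal (D ^ e / ((δ/2) ^ N * ω)) := by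
    rw [hW_def, ENNReal.ofReal_div_of_pos (by positivity), ENNReal.div_eq_inv_mul, mul_comm]
  rw [hcoef]
  gcongr
  rw [← lintegral_biUnion_finset (cube_pairwise_disjoint δ S) (fun z _ => measurableSet_cube δ z)]
  exact setLIntegral_le_lintegral _ _


-- coeFn of a finite sum in Lp
lemma Lp_coeFn_finset_sum {α E : Type*} [MeasurableSpace α] {μ : Measure α}
    [NormedAddCommGroup E] {p : ℝ≥0∞} {ι : Type*} (s : Finset ι) (f : ι → Lp E p μ) :
    ⇑(∑ i ∈ s, f i) =ᵐ[μ] fun x => ∑ i ∈ s, f i x := by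
  classical
  induction s using Finset.induction_on with
  | empty => simp only [Finset.sum_empty]; exact Lp.coeFn_zero E p μ
  | insert a t hns ih =>
    rw [Finset.sum_insert hns]
    filter_upwards [Lp.coeFn_add (f a) (∑ i ∈ t, f i), ih] with x hx hx2
    rw [hx]
    simp only [Pi.add_apply, hx2]
    rw [Finset.sum_insert hns]

-- tail estimate
lemma tail_est {N : ℕ} (g : EuclideanSpace ℝ (Fin N) → ℝ) {p : ℝ}
    (V : EuclideanSpace ℝ (Fin N) → ℝ) (ε : ℝ) (C : ℝ≥0∞) {M R : ℝ} (hM : 0 < M)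
    (hV : ∀ x : EuclideanSpace ℝ (Fin N), R ≤ ‖x‖ → M ≤ V (ε • x))
    (hb : ∫⁻ x, ENNReal.ofReal (V (ε • x) * |g x| ^ p) ≤ C) :
    ∫⁻ x in {x : EuclideanSpace ℝ (Fin N) | R ≤ ‖x‖}, ENNReal.ofReal (|g x| ^ p) ≤
      C / ENNReal.ofReal M := by
  have hreg : MeasurableSet {x : EuclideanSpace ℝ (Fin N) | R ≤ ‖x‖} :=
    measurableSet_le measurable_const measurable_norm
  rw [ENNReal.le_div_iff_mul_le (Or.inl (by simp [hM])) (Or.inl ENNReal.ofReal_ne_top)]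
  rw [← lintegral_mul_const' _ _ ENNReal.ofReal_ne_top]
  calc ∫⁻ x in {x : EuclideanSpace ℝ (Fin N) | R ≤ ‖x‖},
        ENNReal.ofReal (|g x| ^ p) * ENNReal.ofReal M
      ≤ ∫⁻ x in {x : EuclideanSpace ℝ (Fin N) | R ≤ ‖x‖},
          ENNReal.ofReal (V (ε • x) * |g x| ^ p) := by
        apply lintegral_mono_ae
        rw [ae_restrict_iff' hreg]
        apply Filter.Eventually.of_forall
        intro x hx
        rw [← ENNReal.ofReal_mul (Real.rpow_nonneg (abs_nonneg _) p)]
        apply ENNReal.ofReal_le_ofReal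
        rw [mul_comm]
        exact mul_le_mul_of_nonneg_right (hV x hx) (Real.rpow_nonneg (abs_nonneg _) p)
  _ ≤ ∫⁻ x, ENNReal.ofReal (V (ε • x) * |g x| ^ p) := setLIntegral_le_lintegral _ _
  _ ≤ C := hb


set_option maxHeartbeats 1000000 in
set_option synthInstance.maxHeartbeats 400000 in
theorem stmt18 (N : ℕ) (hN : 1 ≤ N) (s p ε V₀ : ℝ) (hs : s ∈ Set.Ioo (0:ℝ) 1)
    (hp : 1 < p) (hNsp : s * p < N) (hε : 0 < ε)
    (V : EuclideanSpace ℝ (Fin N) → ℝ) (hV : Continuous V)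
    (hV₀pos : 0 < V₀) (hVlb : ∀ x, V₀ ≤ V x) (hVinf : (⨅ x, V x) = V₀)
    (hVcoer : Tendsto V (cocompact (EuclideanSpace ℝ (Fin N))) atTop)
    (u : ℕ → EuclideanSpace ℝ (Fin N) → ℝ)
    (humeas : ∀ n, AEStronglyMeasurable (u n) volume)
    (hup : ∀ n, MemLp (u n) (ENNReal.ofReal p) volume)
    (C : ℝ≥0∞) (hC : C ≠ ⊤)
    (hbdd : ∀ n,
      (∫⁻ x, ∫⁻ y,
          ENNReal.ofReal (|u n x - u n y| ^ p / dist x y ^ ((N : ℝ) + s * p))) +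
        (∫⁻ x, ENNReal.ofReal (V (ε • x) * |u n x| ^ p)) ≤ C) :
    ∃ φ : ℕ → ℕ, StrictMono φ ∧
      ∃ v : EuclideanSpace ℝ (Fin N) → ℝ, MemLp v (ENNReal.ofReal p) volume ∧
        Tendsto (fun n => ∫ x, |u (φ n) x - v x| ^ p) atTop (𝓝 0) := by
  classical
  have hs0 : 0 < s := hs.1
  have hp0 : 0 < p := lt_trans one_pos hp
  have hsp : 0 < s * p := mul_pos hs0 hp0
  have he : 0 ≤ (N:ℝ) + s * p := by positivity
  set pe : ℝ≥0∞ := ENNReal.ofReal p with hpe_def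
  have hpe0 : pe ≠ 0 := by simp [hpe_def, hp0]
  have hpet : pe ≠ ⊤ := ENNReal.ofReal_ne_top
  have hpetoReal : pe.toReal = p := ENNReal.toReal_ofReal hp0.le
  haveI : Fact (1 ≤ pe) := ⟨ENNReal.one_le_ofReal.2 hp.le⟩
  have heLp : ∀ f : EuclideanSpace ℝ (Fin N) → ℝ,
      eLpNorm f pe volume = (∫⁻ x, ENNReal.ofReal (|f x| ^ p)) ^ (1/p) := by
    intro f
    rw [eLpNorm_eq_lintegral_rpow_enorm_toReal hpe0 hpet, hpetoReal]
    congr 1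
    apply lintegral_congr
    intro x
    rw [← ofReal_norm, Real.norm_eq_abs,
      ENNReal.ofReal_rpow_of_nonneg (abs_nonneg _) hp0.le]
  have hG : ∀ n, (∫⁻ x, ∫⁻ y,
      ENNReal.ofReal (|u n x - u n y| ^ p / dist x y ^ ((N : ℝ) + s * p))) ≤ C :=
    fun n => le_trans le_self_add (hbdd n)
  have hVint : ∀ n, (∫⁻ x, ENNReal.ofReal (V (ε • x) * |u n x| ^ p)) ≤ C :=
    fun n => le_trans le_add_self (hbdd n)
  have hLp_bound : ∀ n, ∫⁻ x, ENNReal.ofReal (|u n x| ^ p) ≤ C / ENNReal.ofReal V₀ := by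
    intro n
    have h0 := tail_est (u n) V ε C hV₀pos (R := 0) (fun x _ => hVlb _) (hVint n)
    have huniv : {x : EuclideanSpace ℝ (Fin N) | (0:ℝ) ≤ ‖x‖} = Set.univ :=
      Set.eq_univ_of_forall (fun x => norm_nonneg x)
    rwa [huniv, Measure.restrict_univ] at h0
  have hCV₀t : C / ENNReal.ofReal V₀ ≠ ⊤ :=
    (ENNReal.div_lt_top hC (ENNReal.ofReal_pos.2 hV₀pos).ne').ne
  set Bens : ℝ≥0∞ := (C / ENNReal.ofReal V₀) ^ (1/p) with hBens
  have hBenst : Bens ≠ ⊤ := ENNReal.rpow_ne_top_of_nonneg (by positivity) hCV₀t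
  set B : ℝ := Bens.toReal with hB
  have hnorm_bound : ∀ n, ‖(hup n).toLp (u n)‖ ≤ B := by
    intro n
    rw [Lp.norm_toLp, heLp]
    exact ENNReal.toReal_mono hBenst (ENNReal.rpow_le_rpow (hLp_bound n) (by positivity))
  -- totally bounded
  have hTB : TotallyBounded (Set.range fun n => (hup n).toLp (u n)) := by
    rw [Metric.totallyBounded_iff]
    intro η hη
    set θ : ℝ := min (η/2) 1 with hθdef
    have hθ0 : 0 < θ := lt_min (by linarith) one_pos
    set T : ℝ≥0∞ := (ENNReal.ofReal θ) ^ p with hT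
    have hT0 : T ≠ 0 := by
      rw [hT]
      apply (ENNReal.rpow_pos (by simp [hθ0]) ENNReal.ofReal_ne_top).ne'
    have hTt : T ≠ ⊤ := ENNReal.rpow_ne_top_of_nonneg hp0.le ENNReal.ofReal_ne_top
    have hT20 : T/2 ≠ 0 := by simp [ENNReal.div_eq_zero_iff, hT0]
    have hT2t : T/2 ≠ ⊤ := (ENNReal.div_lt_top hTt (by norm_num)).ne
    -- tail parameter M
    have hCT2 : C / (T/2) ≠ ⊤ := (ENNReal.div_lt_top hC hT20).ne
    set M : ℝ := (C / (T/2)).toReal + 1 with hM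
    have hM0 : 0 < M := by positivity
    have hMbound : C / ENNReal.ofReal M ≤ T/2 := by
      rw [ENNReal.div_le_iff_le_mul (Or.inl (by simp [hM0])) (Or.inl ENNReal.ofReal_ne_top)]
      have h1 : C / (T/2) ≤ ENNReal.ofReal M := by
        rw [← ENNReal.ofReal_toReal hCT2]
        exact ENNReal.ofReal_le_ofReal (by rw [hM]; linarith)
      have h2 := (ENNReal.div_le_iff_le_mul (Or.inl hT20) (Or.inl hT2t)).1 h1
      calc C ≤ ENNReal.ofReal M * (T/2) := h2
      _ = T/2 * ENNReal.ofReal M := mul_comm _ _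
    -- coercivity radius
    obtain ⟨K, hKc, hKsub⟩ := Filter.mem_cocompact.1 (hVcoer.eventually (eventually_ge_atTop M))
    obtain ⟨r, hr⟩ := hKc.isBounded.subset_closedBall 0
    set R : ℝ := (|r| + 1)/ε with hR
    have hVtail : ∀ x : EuclideanSpace ℝ (Fin N), R ≤ ‖x‖ → M ≤ V (ε • x) := by
      intro x hx
      apply hKsub
      intro hmem
      have h1 : ‖ε • x‖ ≤ r := by simpa [dist_eq_norm] using hr hmem
      have h2 : ‖ε • x‖ = ε * ‖x‖ := by rw [norm_smul, Real.norm_eq_abs, abs_of_pos hε]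
      have h3 : ε * R ≤ ε * ‖x‖ := by nlinarith
      have h4 : ε * R = |r| + 1 := by rw [hR]; field_simp
      nlinarith [abs_nonneg r, le_abs_self r]
    -- cube size δ
    set ω : ℝ := (volume (ball (0:EuclideanSpace ℝ (Fin N)) 1)).toReal with hω
    have hω0 : 0 < ω := ENNReal.toReal_pos (measure_ball_pos volume _ one_pos).ne'
      measure_ball_lt_top.ne
    have hsqrtN : 0 < Real.sqrt N := Real.sqrt_pos.2 (by exact_mod_cast Nat.pos_of_ne_zero (by omega))
    set K₀ : ℝ := (Real.sqrt N) ^ ((N:ℝ) + s*p) * 2^N / ω with hK₀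
    have hK₀0 : 0 < K₀ := by
      apply div_pos (mul_pos (Real.rpow_pos_of_pos hsqrtN _) (by positivity)) hω0
    have hlim : Tendsto (fun δ : ℝ => ENNReal.ofReal (δ ^ (s*p) * K₀) * C) (𝓝[>] 0) (𝓝 0) := by
      have h1 : Tendsto (fun δ : ℝ => δ ^ (s*p)) (𝓝[>] (0:ℝ)) (𝓝 0) := by
        have := (Real.continuousAt_rpow_const 0 (s*p) (Or.inr hsp.le)).tendsto
        rw [Real.zero_rpow hsp.ne'] at this
        exact this.mono_left nhdsWithin_le_nhds
      have h2 : Tendsto (fun δ : ℝ => δ ^ (s*p) * K₀) (𝓝[>] (0:ℝ)) (𝓝 0) := by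
        simpa using h1.mul_const K₀
      have h3 : Tendsto (fun δ : ℝ => ENNReal.ofReal (δ ^ (s*p) * K₀)) (𝓝[>] (0:ℝ)) (𝓝 0) := by
        simpa [Function.comp_def] using (ENNReal.continuous_ofReal.tendsto 0).comp h2
      simpa using ENNReal.Tendsto.mul_const h3 (Or.inr hC)
    have hev2 : ∀ᶠ δ in 𝓝[>] (0:ℝ),
        ENNReal.ofReal (δ ^ (s*p) * K₀) * C < T/2 := by
      exact hlim.eventually_lt_const (ENNReal.div_pos hT0 ENNReal.ofNat_ne_top)
    obtain ⟨δ, hδsm, hδ0⟩ := (hev2.and self_mem_nhdsWithin).exists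
    replace hδ0 : 0 < δ := hδ0
    -- rewrite the cube coefficient
    have hDfac_eq : (δ * Real.sqrt N) ^ ((N:ℝ) + s * p) / ((δ/2) ^ N * ω)
        = δ ^ (s*p) * K₀ := by
      rw [Real.mul_rpow hδ0.le (Real.sqrt_nonneg _)]
      have h1 : δ ^ ((N:ℝ) + s * p) = δ ^ (N:ℕ) * δ ^ (s*p) := by
        rw [← Real.rpow_natCast δ N, ← Real.rpow_add hδ0]
      rw [h1, hK₀, div_pow]
      have hδN : (0:ℝ) < δ ^ N := pow_pos hδ0 N
      field_simp
    have hcube_small : ENNReal.ofReal ((δ * Real.sqrt N) ^ ((N:ℝ) + s * p) /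
        ((δ/2) ^ N * ω)) * C ≤ T/2 := by
      rw [hDfac_eq]
      exact hδsm.le
    -- the grid
    set m : ℕ := ⌈R/δ⌉₊ with hm
    have hRm : R ≤ δ * m := by
      have h1 := Nat.le_ceil (R/δ)
      rw [div_le_iff₀ hδ0] at h1
      rw [hm]; linarith
    set S : Finset (Fin N → ℤ) := Finset.Icc (fun _ => -(m:ℤ)-1) (fun _ => (m:ℤ)) with hS
    set A : Set (EuclideanSpace ℝ (Fin N)) := ⋃ z ∈ S, cube N δ z with hA
    have hAm : MeasurableSet A :=
      MeasurableSet.biUnion S.countable_toSet (fun z _ => measurableSet_cube δ z)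
    set gens : Set (Lp ℝ pe volume) :=
      (fun z => indicatorConstLp pe (measurableSet_cube δ z) (volume_cube_lt_top hδ0 z).ne
        (1:ℝ)) '' (S : Set (Fin N → ℤ)) with hgens
    set W : Submodule ℝ (Lp ℝ pe volume) := Submodule.span ℝ gens with hW
    haveI : FiniteDimensional ℝ W :=
      FiniteDimensional.span_of_finite ℝ (S.finite_toSet.image _)
    -- key approximation
    have key : ∀ n, ∃ PL : Lp ℝ pe volume, PL ∈ W ∧
        dist ((hup n).toLp (u n)) PL ≤ θ ∧ ‖PL‖ ≤ B + 1 := by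
      intro n
      set c : (Fin N → ℤ) → ℝ := cubeAvg N δ (u n) with hc
      set PL : Lp ℝ pe volume := ∑ z ∈ S, c z •
        indicatorConstLp pe (measurableSet_cube δ z) (volume_cube_lt_top hδ0 z).ne (1:ℝ)
        with hPL
      have hPLW : PL ∈ W := by
        apply Submodule.sum_mem
        intro z hz
        exact Submodule.smul_mem _ _ (Submodule.subset_span ⟨z, hz, rfl⟩)
      set Pf := pfun N δ S (u n) with hPf
      have hcoe : ⇑PL =ᵐ[volume] Pf := by
        have h1 := Lp_coeFn_finset_sum S (fun z => c z •
          indicatorConstLp pe (measurableSet_cube δ z) (volume_cube_lt_top hδ0 z).ne (1:ℝ))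
        have h2 : ∀ z ∈ S, ∀ᵐ x, (⇑(c z • indicatorConstLp pe (measurableSet_cube δ z)
            (volume_cube_lt_top hδ0 z).ne (1:ℝ))) x
            = (cube N δ z).indicator (fun _ => c z) x := by
          intro z hz
          filter_upwards [Lp.coeFn_smul (c z) (indicatorConstLp pe (measurableSet_cube δ z)
            (volume_cube_lt_top hδ0 z).ne (1:ℝ)), indicatorConstLp_coeFn
            (p := pe) (hs := measurableSet_cube δ z) (hμs := (volume_cube_lt_top hδ0 z).ne)
            (c := (1:ℝ))] with x ha hb
          rw [ha]
          simp only [Pi.smul_apply, hb, smul_eq_mul]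
          rw [Set.indicator_apply, Set.indicator_apply]
          split <;> simp
        have h3 := (Filter.eventually_all_finset S).2 h2
        filter_upwards [h1, h3] with x hx1 hx3
        rw [hPL, hx1]
        rw [hPf, pfun]
        exact Finset.sum_congr rfl (fun z hz => hx3 z hz)
      have hdistb : dist ((hup n).toLp (u n)) PL ≤ θ := by
        rw [Lp.dist_def]
        have hcongr : eLpNorm (⇑((hup n).toLp (u n)) - ⇑PL) pe volume
            = eLpNorm (fun x => u n x - Pf x) pe volume := by
          apply eLpNorm_congr_ae
          filter_upwards [(hup n).coeFn_toLp, hcoe] with x h1 h2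
          simp [h1, h2]
        rw [hcongr, heLp]
        have hJ : ∫⁻ x, ENNReal.ofReal (|u n x - Pf x| ^ p) ≤ T := by
          rw [← lintegral_add_compl (fun x => ENNReal.ofReal (|u n x - Pf x| ^ p)) hAm]
          have hpart1 : ∫⁻ x in A, ENNReal.ofReal (|u n x - Pf x| ^ p) ≤ T/2 := by
            calc ∫⁻ x in A, ENNReal.ofReal (|u n x - Pf x| ^ p)
                ≤ ENNReal.ofReal ((δ * Real.sqrt N) ^ ((N:ℝ) + s * p) /
                    ((δ/2) ^ N * ω)) *
                  ∫⁻ x, ∫⁻ y, ENNReal.ofReal (|u n x - u n y| ^ p /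
                    dist x y ^ ((N:ℝ) + s * p)) :=
                  cubes_estimate hN hp he hδ0 (u n) (hup n) S
            _ ≤ ENNReal.ofReal ((δ * Real.sqrt N) ^ ((N:ℝ) + s * p) /
                    ((δ/2) ^ N * ω)) * C := by gcongr; exact hG n
            _ ≤ T/2 := hcube_small
          have hpart2 : ∫⁻ x in Aᶜ, ENNReal.ofReal (|u n x - Pf x| ^ p) ≤ T/2 := by
            have hidx : ∀ x : EuclideanSpace ℝ (Fin N), x ∈ Aᶜ → cubeIdx N δ x ∉ S := by
              intro x hx hmem
              exact hx (Set.mem_biUnion hmem (mem_cube_iff.2 rfl))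
            have heq : ∫⁻ x in Aᶜ, ENNReal.ofReal (|u n x - Pf x| ^ p)
                = ∫⁻ x in Aᶜ, ENNReal.ofReal (|u n x| ^ p) := by
              apply setLIntegral_congr_fun hAm.compl
              intro x hx
              beta_reduce
              rw [hPf, pfun_eq_zero_of_not_mem (hidx x hx), sub_zero]
            rw [heq]
            calc ∫⁻ x in Aᶜ, ENNReal.ofReal (|u n x| ^ p)
                ≤ ∫⁻ x in {x : EuclideanSpace ℝ (Fin N) | R ≤ ‖x‖},
                    ENNReal.ofReal (|u n x| ^ p) := by
                  apply lintegral_mono_set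
                  intro x hx
                  have h1 := norm_ge_of_idx_not_mem hδ0 m x (hidx x hx)
                  exact le_trans hRm h1
            _ ≤ C / ENNReal.ofReal M := tail_est (u n) V ε C hM0 hVtail (hVint n)
            _ ≤ T/2 := hMbound
          calc (∫⁻ x in A, ENNReal.ofReal (|u n x - Pf x| ^ p))
                + (∫⁻ x in Aᶜ, ENNReal.ofReal (|u n x - Pf x| ^ p))
              ≤ T/2 + T/2 := add_le_add hpart1 hpart2
          _ = T := ENNReal.add_halves T
        have hle : (∫⁻ x, ENNReal.ofReal (|u n x - Pf x| ^ p)) ^ (1/p)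
            ≤ ENNReal.ofReal θ := by
          calc (∫⁻ x, ENNReal.ofReal (|u n x - Pf x| ^ p)) ^ (1/p) ≤ T ^ (1/p) :=
            ENNReal.rpow_le_rpow hJ (by positivity)
          _ = ENNReal.ofReal θ := by
            rw [hT, ← ENNReal.rpow_mul, mul_one_div, div_self hp0.ne', ENNReal.rpow_one]
        calc ((∫⁻ x, ENNReal.ofReal (|u n x - Pf x| ^ p)) ^ (1/p)).toReal
            ≤ (ENNReal.ofReal θ).toReal := ENNReal.toReal_mono ENNReal.ofReal_ne_top hle
        _ = θ := ENNReal.toReal_ofReal hθ0.le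
      refine ⟨PL, hPLW, hdistb, ?_⟩
      have h1 : ‖PL‖ - ‖(hup n).toLp (u n)‖ ≤ ‖PL - (hup n).toLp (u n)‖ :=
        norm_sub_norm_le _ _
      have h2 : ‖PL - (hup n).toLp (u n)‖ = dist ((hup n).toLp (u n)) PL := by
        rw [dist_eq_norm, ← norm_neg]; congr 1; abel
      have h3 := hnorm_bound n
      have h4 : θ ≤ 1 := min_le_right _ _
      linarith
    -- the finite net
    have hKcomp : IsCompact (Subtype.val '' (closedBall (0:W) (B+1))) :=
      (isCompact_closedBall _ _).image continuous_subtype_val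
    obtain ⟨t, htfin, htsub⟩ :=
      (Metric.totallyBounded_iff.1 hKcomp.totallyBounded) (η/2) (by linarith)
    refine ⟨t, htfin, ?_⟩
    rintro _ ⟨n, rfl⟩
    obtain ⟨PL, hPLW, hdistb, hnormPL⟩ := key n
    have hPLK : PL ∈ Subtype.val '' (closedBall (0:W) (B+1)) := by
      refine ⟨⟨PL, hPLW⟩, ?_, rfl⟩
      rw [mem_closedBall, dist_zero_right, Submodule.coe_norm]
      exact hnormPL
    obtain ⟨y, hyt, hy⟩ := Set.mem_iUnion₂.1 (htsub hPLK)
    apply Set.mem_iUnion₂.2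
    refine ⟨y, hyt, ?_⟩
    rw [mem_ball]
    calc dist ((hup n).toLp (u n)) y ≤ dist ((hup n).toLp (u n)) PL + dist PL y :=
      dist_triangle _ _ _
    _ < θ + η/2 := by
        apply add_lt_add_of_le_of_lt hdistb
        exact mem_ball.1 hy
    _ ≤ η/2 + η/2 := by
        have := min_le_left (η/2) 1
        linarith
    _ = η := by ring
  -- extract convergent subsequence
  have hclosure : IsCompact (closure (Set.range fun n => (hup n).toLp (u n))) :=
    isCompact_iff_totallyBounded_isComplete.2 ⟨hTB.closure, isClosed_closure.isComplete⟩
  obtain ⟨L, _, φ, hφ, hconv⟩ := hclosure.tendsto_subseq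
    (x := fun n => (hup n).toLp (u n)) (fun n => subset_closure (Set.mem_range_self n))
  refine ⟨φ, hφ, ⇑L, Lp.memLp L, ?_⟩
  have hdist0 : Tendsto (fun n => dist ((hup (φ n)).toLp (u (φ n))) L) atTop (𝓝 0) := by
    have := tendsto_iff_dist_tendsto_zero.1 hconv
    exact this
  have hid : ∀ k, ∫ x, |u k x - L x| ^ p = (dist ((hup k).toLp (u k)) L) ^ p := by
    intro k
    have hmeas1 : AEStronglyMeasurable (fun x => |u k x - L x| ^ p) volume := by
      have hc : Continuous (fun t : ℝ => t ^ p) :=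
        continuous_iff_continuousAt.2 (fun x => Real.continuousAt_rpow_const x p (Or.inr hp0.le))
      exact (hc.measurable.comp_aemeasurable
        (((humeas k).aemeasurable.sub (Lp.aestronglyMeasurable L).aemeasurable).norm)).aestronglyMeasurable
    rw [integral_eq_lintegral_of_nonneg_ae
      (Filter.Eventually.of_forall (fun x => Real.rpow_nonneg (abs_nonneg _) p)) hmeas1]
    have hsn : eLpNorm (fun x => u k x - L x) pe volume
        = (∫⁻ x, ENNReal.ofReal (|u k x - L x| ^ p)) ^ (1/p) := heLp _
    have hJ : ∫⁻ x, ENNReal.ofReal (|u k x - L x| ^ p)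
        = (eLpNorm (fun x => u k x - L x) pe volume) ^ p := by
      rw [hsn, ← ENNReal.rpow_mul, one_div, inv_mul_cancel₀ hp0.ne', ENNReal.rpow_one]
    rw [hJ]
    have hdk : dist ((hup k).toLp (u k)) L
        = (eLpNorm (fun x => u k x - L x) pe volume).toReal := by
      rw [Lp.dist_def]
      congr 1
      apply eLpNorm_congr_ae
      filter_upwards [(hup k).coeFn_toLp] with x h1
      simp [h1]
    rw [hdk, ENNReal.toReal_rpow]
  have hfun : (fun n => ∫ x, |u (φ n) x - L x| ^ p)
      = fun n => (dist ((hup (φ n)).toLp (u (φ n))) L) ^ p := by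
    funext n; exact hid (φ n)
  rw [hfun]
  have hcont : ContinuousAt (fun t : ℝ => t ^ p) 0 :=
    Real.continuousAt_rpow_const 0 p (Or.inr hp0.le)
  have := hcont.tendsto.comp hdist0
  rwa [Real.zero_rpow hp0.ne'] at this
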